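/- Let q ≥ 2 be an integer, θ = 1 − 1/q, ξ(x) = (√(θ(1−x)) − √(x(1−θ)))² for x ∈ [0,θ], and let α_MRRW(x) = H_q(ξ(x)) be the first MRRW bound. If q = 2 then α_MRRW is convex on [0,θ]. If q ≥ 3 then there exists δ_MRRW with 1/2 − √(q−1)/q < δ_MRRW < (1 − 2/q)² such that α_MRRW is concave on [0, δ_MRRW] and convex on [δ_MRRW, θ]. -/

import Mathlib

open Filter Real Set

/-- The q-ary entropy function. -/
noncomputable def qEntropy (q : ℕ) (x : ℝ) : ℝ :=
  x * Real.logb q (((q : ℝ) - 1) / x) + (1 - x) * Real.logb q (1 / (1 - x))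

/-- `ξ(x) = (√(θ(1-x)) - √(x(1-θ)))²` with `θ = 1 - 1/q`. -/
noncomputable def xiFn (q : ℕ) (x : ℝ) : ℝ :=
  (Real.sqrt ((1 - 1 / (q : ℝ)) * (1 - x)) -
    Real.sqrt (x * (1 - (1 - 1 / (q : ℝ))))) ^ 2

/-- The first MRRW bound `α_MRRW(x) = H_q(ξ(x))`. -/
noncomputable def alphaMRRW (q : ℕ) (x : ℝ) : ℝ :=
  qEntropy q (xiFn q x)

namespace MRRW

noncomputable def sf (x : ℝ) : ℝ := Real.sqrt (x * (1 - x))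
noncomputable def thQ (q : ℕ) : ℝ := 1 - 1 / (q : ℝ)
noncomputable def cQ (q : ℕ) : ℝ := Real.sqrt ((q : ℝ) - 1) / (q : ℝ)
noncomputable def xi0 (q : ℕ) (x : ℝ) : ℝ := thQ q + (1 - 2 * thQ q) * x - 2 * cQ q * sf x
noncomputable def Lf (q : ℕ) (y : ℝ) : ℝ := Real.log ((q : ℝ) - 1) - Real.log y + Real.log (1 - y)
noncomputable def Gf (q : ℕ) (y : ℝ) : ℝ :=
  (y * Real.log ((q : ℝ) - 1) - y * Real.log y - (1 - y) * Real.log (1 - y)) / Real.log q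
noncomputable def F0 (q : ℕ) (x : ℝ) : ℝ := Gf q (xi0 q x)
noncomputable def xiD (q : ℕ) (x : ℝ) : ℝ := (1 - 2 * thQ q) - cQ q * (1 - 2 * x) / sf x
noncomputable def F1 (q : ℕ) (x : ℝ) : ℝ := Lf q (xi0 q x) / Real.log q * xiD q x
noncomputable def F2 (q : ℕ) (x : ℝ) : ℝ :=
  ((-(xiD q x) / xi0 q x - xiD q x / (1 - xi0 q x)) * xiD q x
      + Lf q (xi0 q x) * (cQ q / (2 * sf x ^ 3))) / Real.log q
noncomputable def Phi (q : ℕ) (x : ℝ) : ℝ := Lf q (xi0 q x) - 2 * sf x / cQ q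
noncomputable def PhiD (q : ℕ) (x : ℝ) : ℝ :=
  -(xiD q x) / xi0 q x - xiD q x / (1 - xi0 q x) - 2 * ((1 - 2 * x) / (2 * sf x)) / cQ q

variable {q : ℕ} {x y : ℝ}

lemma hQ2 (hq : 2 ≤ q) : (2 : ℝ) ≤ (q : ℝ) := by exact_mod_cast hq
lemma hQ0 (hq : 2 ≤ q) : (0 : ℝ) < (q : ℝ) := lt_of_lt_of_le two_pos (hQ2 hq)
lemma hQm1 (hq : 2 ≤ q) : (1 : ℝ) ≤ (q : ℝ) - 1 := by have := hQ2 hq; linarith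
lemma logQ_pos (hq : 2 ≤ q) : 0 < Real.log q :=
  Real.log_pos (by have := hQ2 hq; linarith)
lemma c_pos (hq : 2 ≤ q) : 0 < cQ q :=
  div_pos (Real.sqrt_pos.2 (by have := hQm1 hq; linarith)) (hQ0 hq)
lemma th_half (hq : 2 ≤ q) : 1 / 2 ≤ thQ q := by
  have h := hQ2 hq
  have : 1 / (q : ℝ) ≤ 1 / 2 := by
    apply one_div_le_one_div_of_le <;> linarith
  simp only [thQ]; linarith
lemma th_lt_one (hq : 2 ≤ q) : thQ q < 1 := by
  have := hQ0 hq
  simp only [thQ]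
  have : 0 < 1 / (q : ℝ) := by positivity
  linarith
lemma th_pos (hq : 2 ≤ q) : 0 < thQ q := lt_of_lt_of_le (by norm_num) (th_half hq)
lemma c_sq (hq : 2 ≤ q) : cQ q ^ 2 = thQ q * (1 - thQ q) := by
  have h0 := hQ0 hq
  have h1 : Real.sqrt ((q:ℝ) - 1) ^ 2 = (q:ℝ) - 1 := Real.sq_sqrt (by have := hQm1 hq; linarith)
  have hne : (q:ℝ) ≠ 0 := h0.ne'
  simp only [cQ, thQ, div_pow]
  rw [h1]
  field_simp
  ring_nf
lemma c_eq (hq : 2 ≤ q) : cQ q = Real.sqrt (thQ q * (1 - thQ q)) := by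
  rw [← c_sq hq, Real.sqrt_sq (c_pos hq).le]
lemma two_c_le_one (hq : 2 ≤ q) : 2 * cQ q ≤ 1 := by
  nlinarith [c_sq hq, c_pos hq, th_half hq, th_lt_one hq, sq_nonneg (2 * thQ q - 1)]
lemma th_gt_half (hq3 : 3 ≤ q) : 1 / 2 < thQ q := by
  have hq : 2 ≤ q := le_trans (by norm_num) hq3
  have h3 : (3 : ℝ) ≤ (q : ℝ) := by exact_mod_cast hq3
  have h0 := hQ0 hq
  have : 1 / (q : ℝ) ≤ 1 / 3 := by apply one_div_le_one_div_of_le <;> linarith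
  simp only [thQ]; linarith

lemma sf_nonneg : 0 ≤ sf x := Real.sqrt_nonneg _
lemma sf_sq (hx : 0 ≤ x) (hx1 : x ≤ 1) : sf x ^ 2 = x * (1 - x) :=
  Real.sq_sqrt (by nlinarith)
lemma sf_pos (hx : 0 < x) (hx1 : x < 1) : 0 < sf x :=
  Real.sqrt_pos.2 (by nlinarith)

lemma xi0_eq_sq (hq : 2 ≤ q) (hx0 : 0 ≤ x) (hx1 : x ≤ 1) :
    xi0 q x = (Real.sqrt (thQ q * (1 - x)) - Real.sqrt (x * (1 - thQ q))) ^ 2 := by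
  have hth0 := (th_pos hq).le
  have hth1 := (th_lt_one hq).le
  have h1 : Real.sqrt (thQ q * (1 - x)) ^ 2 = thQ q * (1 - x) :=
    Real.sq_sqrt (by nlinarith)
  have h2 : Real.sqrt (x * (1 - thQ q)) ^ 2 = x * (1 - thQ q) :=
    Real.sq_sqrt (by nlinarith)
  have h3 : Real.sqrt (thQ q * (1 - x)) * Real.sqrt (x * (1 - thQ q)) = cQ q * sf x := by
    rw [← Real.sqrt_mul (by nlinarith) , c_eq hq, sf, ← Real.sqrt_mul (by nlinarith)]
    congr 1
    ring
  rw [sub_sq, h1, h2, mul_assoc, h3]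
  simp only [xi0]
  ring

lemma xiFn_eq_xi0 (hq : 2 ≤ q) (hx0 : 0 ≤ x) (hx1 : x ≤ 1) : xiFn q x = xi0 q x := by
  rw [xi0_eq_sq hq hx0 hx1]; rfl

lemma xi0_pos (hq : 2 ≤ q) (hx0 : 0 ≤ x) (hxth : x < thQ q) : 0 < xi0 q x := by
  have hx1 : x ≤ 1 := le_of_lt (lt_of_lt_of_le hxth (th_lt_one hq).le)
  rw [xi0_eq_sq hq hx0 hx1]
  have hlt : Real.sqrt (x * (1 - thQ q)) < Real.sqrt (thQ q * (1 - x)) := by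
    apply Real.sqrt_lt_sqrt (by nlinarith [th_lt_one hq])
    nlinarith [th_lt_one hq]
  exact pow_pos (sub_pos.2 hlt) 2
lemma xi0_le_th (hq : 2 ≤ q) (hx0 : 0 ≤ x) : xi0 q x ≤ thQ q := by
  have h1 : (1 - 2 * thQ q) * x ≤ 0 := by nlinarith [th_half hq]
  have h2 : 0 ≤ 2 * cQ q * sf x := by
    have hc := (c_pos hq).le
    have hs : (0:ℝ) ≤ sf x := sf_nonneg
    positivity
  simp only [xi0]
  linarith
lemma xi0_lt_one (hq : 2 ≤ q) (hx0 : 0 ≤ x) : xi0 q x < 1 :=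
  lt_of_le_of_lt (xi0_le_th hq hx0) (th_lt_one hq)

lemma sf_hasDeriv (hx : x ∈ Set.Ioo (0:ℝ) 1) : HasDerivAt sf ((1 - 2*x) / (2 * sf x)) x := by
  have h : HasDerivAt (fun y : ℝ => y * (1 - y)) (1 - 2*x) x := by
    have := (hasDerivAt_id x).fun_mul ((hasDerivAt_const x (1:ℝ)).fun_sub (hasDerivAt_id x))
    refine this.congr_deriv ?_
    simp only [id_eq]
    ring
  have hne : x * (1 - x) ≠ 0 := by nlinarith [hx.1, hx.2]
  exact h.sqrt hne

lemma xi0_hasDeriv (hq : 2 ≤ q) (hx : x ∈ Set.Ioo (0:ℝ) 1) :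
    HasDerivAt (xi0 q) (xiD q x) x := by
  have hs := sf_hasDeriv hx
  have hsne : sf x ≠ 0 := (sf_pos hx.1 hx.2).ne'
  have h : HasDerivAt (fun y => thQ q + (1 - 2 * thQ q) * y - 2 * cQ q * sf y)
      ((1 - 2 * thQ q) - 2 * cQ q * ((1 - 2*x) / (2 * sf x))) x := by
    have h1 := ((hasDerivAt_id x).const_mul (1 - 2 * thQ q)).const_add (thQ q)
    have h2 := hs.const_mul (2 * cQ q)
    simpa using h1.fun_sub h2
  refine h.congr_deriv ?_
  simp only [xiD]
  field_simp

lemma Gf_hasDeriv (hq : 2 ≤ q) (hy : y ∈ Set.Ioo (0:ℝ) 1) :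
    HasDerivAt (Gf q) (Lf q y / Real.log q) y := by
  have h1 : HasDerivAt (fun z : ℝ => z * Real.log ((q:ℝ) - 1)) (Real.log ((q:ℝ)-1)) y := by
    simpa using (hasDerivAt_id y).mul_const (Real.log ((q:ℝ)-1))
  have h2 : HasDerivAt (fun z : ℝ => z * Real.log z) (Real.log y + 1) y :=
    Real.hasDerivAt_mul_log hy.1.ne'
  have h3 : HasDerivAt (fun z : ℝ => (1 - z) * Real.log (1 - z)) (-(Real.log (1-y) + 1)) y := by
    have hinner : HasDerivAt (fun z : ℝ => 1 - z) (-1) y := by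
      simpa using (hasDerivAt_const y (1:ℝ)).fun_sub (hasDerivAt_id y)
    have houter : HasDerivAt (fun w : ℝ => w * Real.log w) (Real.log (1-y) + 1) (1-y) :=
      Real.hasDerivAt_mul_log (by nlinarith [hy.2])
    have := houter.comp y hinner
    simpa [Function.comp_def] using this
  have h := ((h1.fun_sub h2).fun_sub h3).div_const (Real.log q)
  refine h.congr_deriv ?_
  simp only [Lf]
  ring

lemma xi0_mem (hq : 2 ≤ q) (hx : x ∈ Set.Ioo 0 (thQ q)) : xi0 q x ∈ Set.Ioo (0:ℝ) 1 :=
  ⟨xi0_pos hq hx.1.le hx.2, xi0_lt_one hq hx.1.le⟩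

lemma x_mem01 (hq : 2 ≤ q) (hx : x ∈ Set.Ioo 0 (thQ q)) : x ∈ Set.Ioo (0:ℝ) 1 :=
  ⟨hx.1, lt_trans hx.2 (th_lt_one hq)⟩

lemma F0_hasDeriv (hq : 2 ≤ q) (hx : x ∈ Set.Ioo 0 (thQ q)) :
    HasDerivAt (F0 q) (F1 q x) x := by
  have h := (Gf_hasDeriv hq (xi0_mem hq hx)).comp x (xi0_hasDeriv hq (x_mem01 hq hx))
  exact h

lemma xiD_hasDeriv (hq : 2 ≤ q) (hx : x ∈ Set.Ioo 0 (thQ q)) :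
    HasDerivAt (xiD q) (cQ q / (2 * sf x ^ 3)) x := by
  have hx01 := x_mem01 hq hx
  have hs := sf_hasDeriv hx01
  have hsp := sf_pos hx01.1 hx01.2
  have hsne : sf x ≠ 0 := hsp.ne'
  have hnum' : HasDerivAt (fun y : ℝ => cQ q * (1 - 2 * y)) (cQ q * (-2)) x := by
    have : HasDerivAt (fun y : ℝ => 1 - 2 * y) (-2) x := by
      simpa using (hasDerivAt_const x (1:ℝ)).fun_sub ((hasDerivAt_id x).const_mul 2)
    simpa using this.const_mul (cQ q)
  have hu : HasDerivAt (fun y : ℝ => cQ q * (1 - 2*y) / sf y)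
      ((cQ q * (-2) * sf x - cQ q * (1 - 2*x) * ((1 - 2*x) / (2 * sf x))) / sf x ^ 2) x :=
    hnum'.div hs hsne
  have h : HasDerivAt (xiD q)
      (0 - (cQ q * (-2) * sf x - cQ q * (1 - 2*x) * ((1 - 2*x) / (2 * sf x))) / sf x ^ 2) x :=
    (hasDerivAt_const x (1 - 2 * thQ q)).sub hu
  convert h using 1
  have hs2 : sf x ^ 2 = x * (1 - x) := sf_sq hx01.1.le hx01.2.le
  have key : 4 * sf x ^ 2 + (1 - 2*x)^2 = 1 := by linear_combination 4 * hs2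
  field_simp
  linear_combination (-4 * cQ q) * hs2

noncomputable def LfD (q : ℕ) (x : ℝ) : ℝ := -(xiD q x) / xi0 q x - xiD q x / (1 - xi0 q x)

lemma Lfxi_hasDeriv (hq : 2 ≤ q) (hx : x ∈ Set.Ioo 0 (thQ q)) :
    HasDerivAt (fun z => Lf q (xi0 q z)) (LfD q x) x := by
  have hmem := xi0_mem hq hx
  have hxi := xi0_hasDeriv hq (x_mem01 hq hx)
  have h1 : HasDerivAt (fun z => Real.log (xi0 q z)) ((xi0 q x)⁻¹ * xiD q x) x :=
    (Real.hasDerivAt_log hmem.1.ne').comp x hxi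
  have h2 : HasDerivAt (fun z => Real.log (1 - xi0 q z)) ((1 - xi0 q x)⁻¹ * (-(xiD q x))) x := by
    have hinner : HasDerivAt (fun z => 1 - xi0 q z) (-(xiD q x)) x := by
      simpa using (hasDerivAt_const x (1:ℝ)).fun_sub hxi
    exact (Real.hasDerivAt_log (by nlinarith [hmem.2])).comp x hinner
  have h := ((hasDerivAt_const x (Real.log ((q:ℝ)-1))).fun_sub h1).fun_add h2
  refine h.congr_deriv ?_
  simp only [LfD]
  ring

lemma F1_hasDeriv (hq : 2 ≤ q) (hx : x ∈ Set.Ioo 0 (thQ q)) :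
    HasDerivAt (F1 q) (F2 q x) x := by
  have h := ((Lfxi_hasDeriv hq hx).div_const (Real.log q)).fun_mul (xiD_hasDeriv hq hx)
  refine h.congr_deriv ?_
  simp only [F2, F1, LfD]
  ring

lemma Phi_hasDeriv (hq : 2 ≤ q) (hx : x ∈ Set.Ioo 0 (thQ q)) :
    HasDerivAt (Phi q) (PhiD q x) x := by
  have hs := (sf_hasDeriv (x_mem01 hq hx)).const_mul (2:ℝ)
  have h := (Lfxi_hasDeriv hq hx).fun_sub (hs.div_const (cQ q))
  refine h.congr_deriv ?_
  rfl

noncomputable def Ef (q : ℕ) (x : ℝ) : ℝ := (1 - 2 * thQ q) * sf x - cQ q * (1 - 2 * x)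

lemma xiD_eq (hq : 2 ≤ q) (hx : x ∈ Set.Ioo 0 (thQ q)) : xiD q x = Ef q x / sf x := by
  have hsne : sf x ≠ 0 := (sf_pos hx.1 (x_mem01 hq hx).2).ne'
  simp only [xiD, Ef]
  field_simp

lemma Ef_neg (hq : 2 ≤ q) (hx : x ∈ Set.Ioo 0 (thQ q)) : Ef q x < 0 := by
  have hx01 := x_mem01 hq hx
  have hsp := sf_pos hx01.1 hx01.2
  have hs2 := sf_sq hx01.1.le hx01.2.le
  have hc := c_pos hq
  have hc2 := c_sq hq
  have hth := th_half hq
  have hth1 := th_lt_one hq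
  rcases lt_or_ge x (1/2) with h | h
  · have h1 : 0 < cQ q * (1 - 2*x) := by nlinarith
    have h2 : 0 ≤ (2 * thQ q - 1) * sf x := by nlinarith
    simp only [Ef]; nlinarith
  · have hth2 : 1/2 < thQ q := lt_of_le_of_lt h hx.2
    have hkey : (cQ q * (2*x - 1))^2 < ((2 * thQ q - 1) * sf x)^2 := by
      have h1 : ((2 * thQ q - 1) * sf x)^2 - (cQ q * (2*x - 1))^2
          = (x - (1 - thQ q)) * (thQ q - x) := by
        rw [mul_pow, mul_pow, hs2, hc2]
        ring
      have h2 : 0 < (x - (1 - thQ q)) * (thQ q - x) := by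
        apply mul_pos <;> nlinarith [hx.2]
      nlinarith
    have h3 : cQ q * (2*x - 1) < (2 * thQ q - 1) * sf x := by
      have hnn : 0 ≤ (2 * thQ q - 1) * sf x := by nlinarith
      exact lt_of_pow_lt_pow_left₀ 2 hnn hkey
    simp only [Ef]; nlinarith

lemma xiD_neg (hq : 2 ≤ q) (hx : x ∈ Set.Ioo 0 (thQ q)) : xiD q x < 0 := by
  rw [xiD_eq hq hx]
  exact div_neg_of_neg_of_pos (Ef_neg hq hx) (sf_pos hx.1 (x_mem01 hq hx).2)

lemma key_identity (hq : 2 ≤ q) (hx : x ∈ Set.Ioo 0 (thQ q)) :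
    xi0 q x * (1 - xi0 q x) = Ef q x ^ 2 := by
  have hx01 := x_mem01 hq hx
  have hs2 := sf_sq hx01.1.le hx01.2.le
  have hc2 := c_sq hq
  simp only [xi0, Ef]
  linear_combination (-(1 - 2*thQ q)^2 - 4 * cQ q ^2) * hs2 + (-1 : ℝ) * hc2

lemma F2_eq (hq : 2 ≤ q) (hx : x ∈ Set.Ioo 0 (thQ q)) :
    F2 q x = cQ q * Phi q x / (2 * sf x ^ 3 * Real.log q) := by
  have hx01 := x_mem01 hq hx
  have hsp := sf_pos hx01.1 hx01.2
  have hmem := xi0_mem hq hx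
  have hxi1 : (0:ℝ) < 1 - xi0 q x := by nlinarith [hmem.2]
  have hE := xiD_eq hq hx
  have hkey := key_identity hq hx
  have hc := c_pos hq
  have hlog := logQ_pos hq
  have hxiD := xiD_neg hq hx
  have hEx : Ef q x = sf x * xiD q x := by rw [hE]; field_simp
  rw [hEx] at hkey
  have hne0 : xi0 q x ≠ 0 := hmem.1.ne'
  have hne1 : (1 - xi0 q x) ≠ 0 := hxi1.ne'
  have hsne : sf x ≠ 0 := hsp.ne'
  have hxiDne : xiD q x ≠ 0 := hxiD.ne
  have hA : -xiD q x / xi0 q x - xiD q x / (1 - xi0 q x)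
      = -(xiD q x) / (xi0 q x * (1 - xi0 q x)) := by
    field_simp
    ring
  have hB : -(xiD q x) / (xi0 q x * (1 - xi0 q x)) = -1 / (sf x ^ 2 * xiD q x) := by
    rw [hkey]
    field_simp
  simp only [F2, Phi]
  rw [hA, hB]
  field_simp
  ring

noncomputable def Mf (q : ℕ) (x : ℝ) : ℝ := 4 * cQ q * sf x - (2 * thQ q - 1) * (1 - 2 * x)

lemma PhiD_eq (hq : 2 ≤ q) (hx : x ∈ Set.Ioo 0 (thQ q)) :
    PhiD q x = Mf q x / (cQ q * sf x * (-(xiD q x))) := by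
  have hx01 := x_mem01 hq hx
  have hsp := sf_pos hx01.1 hx01.2
  have hs2 := sf_sq hx01.1.le hx01.2.le
  have hmem := xi0_mem hq hx
  have hxi1 : (0:ℝ) < 1 - xi0 q x := by nlinarith [hmem.2]
  have hkey := key_identity hq hx
  have hE := xiD_eq hq hx
  have hEx : Ef q x = sf x * xiD q x := by rw [hE]; field_simp
  rw [hEx] at hkey
  have hc := c_pos hq
  have hxiD := xiD_neg hq hx
  have hne0 : xi0 q x ≠ 0 := hmem.1.ne'
  have hne1 : (1 - xi0 q x) ≠ 0 := hxi1.ne'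
  have hsne : sf x ≠ 0 := hsp.ne'
  have hxiDne : xiD q x ≠ 0 := hxiD.ne
  have hA : -xiD q x / xi0 q x - xiD q x / (1 - xi0 q x)
      = -(xiD q x) / (xi0 q x * (1 - xi0 q x)) := by
    field_simp
    ring
  have hB : -(xiD q x) / (xi0 q x * (1 - xi0 q x)) = -1 / (sf x ^ 2 * xiD q x) := by
    rw [hkey]
    field_simp
  have hEne : Ef q x ≠ 0 := (Ef_neg hq hx).ne
  have hD : cQ q * sf x * (-(xiD q x)) ≠ 0 :=
    mul_ne_zero (mul_ne_zero hc.ne' hsne) (by simpa using hxiDne)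
  simp only [PhiD]
  rw [hA, hB, eq_div_iff hD]
  have hgoal : (-1 / (sf x^2 * xiD q x) - 2*((1-2*x)/(2*sf x))/cQ q) * (cQ q * sf x * (-(xiD q x)))
      = cQ q / sf x + (1-2*x) * xiD q x := by
    field_simp
    ring
  rw [hgoal, hE]
  simp only [Ef, Mf]
  field_simp
  ring_nf
  linear_combination (-(cQ q*4)) * hs2

lemma Mf_pos (hq : 2 ≤ q) (hx : x ∈ Set.Ioo 0 (thQ q)) (hx0 : 1/2 - cQ q < x) :
    0 < Mf q x := by
  have hx01 := x_mem01 hq hx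
  have hsp := sf_pos hx01.1 hx01.2
  have hs2 := sf_sq hx01.1.le hx01.2.le
  have hc := c_pos hq
  have hc2 := c_sq hq
  have hth := th_half hq
  have hth1 := th_lt_one hq
  rcases le_or_gt (1/2 : ℝ) x with h | h
  · have h1 : (2 * thQ q - 1) * (1 - 2 * x) ≤ 0 := by nlinarith
    have h2 : 0 < 4 * cQ q * sf x := by positivity
    simp only [Mf]; linarith
  · have hsq : ((2 * thQ q - 1) * (1 - 2 * x))^2 < (4 * cQ q * sf x)^2 := by
      have e1 : (4 * cQ q * sf x)^2 - ((2 * thQ q - 1) * (1 - 2 * x))^2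
          = (2*x - (1 - 2 * cQ q)) * ((1 + 2 * cQ q) - 2*x) := by
        rw [mul_pow, mul_pow, hs2]
        rw [mul_pow]
        nlinarith [hc2]
      nlinarith [hx0, h, hc]
    have hnn : 0 ≤ 4 * cQ q * sf x := by positivity
    have := lt_of_pow_lt_pow_left₀ 2 hnn hsq
    simp only [Mf]; nlinarith
lemma Mf_neg (hq : 2 ≤ q) (hx : x ∈ Set.Ioo 0 (thQ q)) (hx0 : x < 1/2 - cQ q) :
    Mf q x < 0 := by
  have hx01 := x_mem01 hq hx
  have hsp := sf_pos hx01.1 hx01.2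
  have hs2 := sf_sq hx01.1.le hx01.2.le
  have hc := c_pos hq
  have hc2 := c_sq hq
  have hth := th_half hq
  have hth1 := th_lt_one hq
  have hxh : x < 1/2 := by nlinarith
  have hsq : (4 * cQ q * sf x)^2 < ((2 * thQ q - 1) * (1 - 2 * x))^2 := by
    have e1 : ((2 * thQ q - 1) * (1 - 2 * x))^2 - (4 * cQ q * sf x)^2
        = ((1 - 2 * cQ q) - 2*x) * ((1 + 2 * cQ q) - 2*x) := by
      rw [mul_pow, mul_pow, hs2]
      rw [mul_pow]
      nlinarith [hc2]
    nlinarith [hx0, hxh, hc]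
  have hnn : 0 ≤ (2 * thQ q - 1) * (1 - 2 * x) := by nlinarith
  have := lt_of_pow_lt_pow_left₀ 2 hnn hsq
  simp only [Mf]; nlinarith

lemma sf_zero : sf 0 = 0 := by simp [sf]
lemma xi0_zero : xi0 q 0 = thQ q := by simp [xi0, sf_zero]

lemma Phi_zero (hq : 2 ≤ q) : Phi q 0 = 0 := by
  have h0 := hQ0 hq
  have h1 := hQm1 hq
  have hth : thQ q = ((q:ℝ) - 1) / (q:ℝ) := by simp only [thQ]; field_simp
  have hth2 : 1 - thQ q = 1 / (q:ℝ) := by simp only [thQ]; ring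
  simp only [Phi, Lf, xi0_zero, sf_zero]
  rw [hth2, hth, Real.log_div (by linarith) h0.ne', Real.log_div one_ne_zero h0.ne',
    Real.log_one]
  ring

lemma sf_cont : Continuous sf := Real.continuous_sqrt.comp (by continuity)

lemma xi0_cont : Continuous (xi0 q) := by
  have h : Continuous (fun x => thQ q + (1 - 2 * thQ q) * x - 2 * cQ q * sf x) := by
    have := sf_cont
    continuity
  exact h

lemma Phi_contAt (hq : 2 ≤ q) (hx0 : 0 ≤ x) (hx1 : x < thQ q) : ContinuousAt (Phi q) x := by
  have hxi := xi0_pos hq hx0 hx1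
  have hxi1 : xi0 q x < 1 := xi0_lt_one hq hx0
  have h1 : ContinuousAt (fun z => Real.log (xi0 q z)) x :=
    (Real.continuousAt_log hxi.ne').comp xi0_cont.continuousAt
  have h2 : ContinuousAt (fun z => Real.log (1 - xi0 q z)) x := by
    apply (Real.continuousAt_log (by linarith)).comp
    exact (continuous_const.sub xi0_cont).continuousAt
  have h3 : ContinuousAt (fun z => 2 * sf z / cQ q) x :=
    ((continuous_const.mul sf_cont).div_const (cQ q)).continuousAt
  exact ((continuousAt_const.sub h1).add h2).sub h3

lemma deriv_Phi (hq : 2 ≤ q) (hx : x ∈ Set.Ioo 0 (thQ q)) : deriv (Phi q) x = PhiD q x :=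
  (Phi_hasDeriv hq hx).deriv

lemma Phi_strictMonoOn (hq : 2 ≤ q) {a b : ℝ} (ha0 : 0 ≤ a) (hax : 1/2 - cQ q ≤ a)
    (hb : b < thQ q) (hab : a < b) : Phi q a < Phi q b := by
  have hmono : StrictMonoOn (Phi q) (Set.Icc a b) := by
    apply strictMonoOn_of_deriv_pos (convex_Icc a b)
    · intro z hz
      exact (Phi_contAt hq (le_trans ha0 hz.1) (lt_of_le_of_lt hz.2 hb)).continuousWithinAt
    · intro z hz
      rw [interior_Icc] at hz
      have hzmem : z ∈ Set.Ioo 0 (thQ q) := ⟨lt_of_le_of_lt ha0 hz.1, lt_trans hz.2 hb⟩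
      rw [deriv_Phi hq hzmem, PhiD_eq hq hzmem]
      apply div_pos (Mf_pos hq hzmem (lt_of_le_of_lt hax hz.1))
      exact mul_pos (mul_pos (c_pos hq) (sf_pos hzmem.1 (x_mem01 hq hzmem).2))
        (neg_pos.2 (xiD_neg hq hzmem))
  exact hmono (Set.left_mem_Icc.2 hab.le) (Set.right_mem_Icc.2 hab.le) hab

lemma Phi_strictAntiOn (hq : 2 ≤ q) {a b : ℝ} (ha0 : 0 ≤ a)
    (hb : b ≤ 1/2 - cQ q) (hbth : b < thQ q) (hab : a < b) : Phi q b < Phi q a := by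
  have hanti : StrictAntiOn (Phi q) (Set.Icc a b) := by
    apply strictAntiOn_of_deriv_neg (convex_Icc a b)
    · intro z hz
      exact (Phi_contAt hq (le_trans ha0 hz.1) (lt_of_le_of_lt hz.2 hbth)).continuousWithinAt
    · intro z hz
      rw [interior_Icc] at hz
      have hzmem : z ∈ Set.Ioo 0 (thQ q) := ⟨lt_of_le_of_lt ha0 hz.1, lt_trans hz.2 hbth⟩
      rw [deriv_Phi hq hzmem, PhiD_eq hq hzmem]
      apply div_neg_of_neg_of_pos (Mf_neg hq hzmem (lt_of_lt_of_le hz.2 hb))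
      exact mul_pos (mul_pos (c_pos hq) (sf_pos hzmem.1 (x_mem01 hq hzmem).2))
        (neg_pos.2 (xiD_neg hq hzmem))
  exact hanti (Set.left_mem_Icc.2 hab.le) (Set.right_mem_Icc.2 hab.le) hab

lemma cQ_two : cQ 2 = 1/2 := by
  simp only [cQ]
  norm_num

lemma c_lt_half (hq3 : 3 ≤ q) : cQ q < 1/2 := by
  have hq : 2 ≤ q := le_trans (by norm_num) hq3
  have hc2 := c_sq hq
  have hth := th_gt_half hq3
  have hth1 := th_lt_one hq
  have hc := c_pos hq
  nlinarith
lemma x0_pos (hq3 : 3 ≤ q) : 0 < 1/2 - cQ q := by have := c_lt_half hq3; linarith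

lemma ht_eq (hq : 2 ≤ q) : 1 - 2/(q:ℝ) = 2 * thQ q - 1 := by
  simp only [thQ]; ring
lemma ht_pos (hq3 : 3 ≤ q) : 0 < 1 - 2/(q:ℝ) := by
  have h3 : (3:ℝ) ≤ (q:ℝ) := by exact_mod_cast hq3
  have : 2/(q:ℝ) ≤ 2/3 := by apply div_le_div_of_nonneg_left <;> linarith
  linarith
lemma h1mA (hq : 2 ≤ q) : 1 - (1 - 2/(q:ℝ))^2 = 4 * cQ q ^ 2 := by
  rw [c_sq hq, ht_eq hq]
  ring

lemma x2_lt_th (hq3 : 3 ≤ q) : (1 - 2/(q:ℝ))^2 < thQ q := by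
  have hq : 2 ≤ q := le_trans (by norm_num) hq3
  have ht := ht_pos hq3
  rw [ht_eq hq] at ht ⊢
  have hth1 := th_lt_one hq
  nlinarith

lemma x0_lt_x2 (hq3 : 3 ≤ q) : 1/2 - cQ q < (1 - 2/(q:ℝ))^2 := by
  have hq : 2 ≤ q := le_trans (by norm_num) hq3
  have hA := h1mA hq
  have hApos : 0 < (1 - 2/(q:ℝ))^2 := pow_pos (ht_pos hq3) 2
  have hc := c_pos hq
  set A := (1 - 2/(q:ℝ))^2 with hAdef
  rcases le_or_gt (1 - 2*A) 0 with h | h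
  · linarith
  · have hAlt : A < 1/2 := by linarith
    have hsq : (1 - 2*A)^2 < (2 * cQ q)^2 := by nlinarith
    have := lt_of_pow_lt_pow_left₀ 2 (by linarith : (0:ℝ) ≤ 2 * cQ q) hsq
    linarith

lemma sf_x2 (hq : 2 ≤ q) (ht : 0 ≤ 1 - 2/(q:ℝ)) :
    sf ((1 - 2/(q:ℝ))^2) = (1 - 2/(q:ℝ)) * (2 * cQ q) := by
  have hA := h1mA hq
  have hc := c_pos hq
  simp only [sf]
  rw [hA, show (1 - 2/(q:ℝ))^2 * (4 * cQ q ^2) = ((1 - 2/(q:ℝ)) * (2 * cQ q))^2 by ring]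
  exact Real.sqrt_sq (by positivity)

lemma xi0_x2 (hq : 2 ≤ q) (ht : 0 ≤ 1 - 2/(q:ℝ)) :
    xi0 q ((1 - 2/(q:ℝ))^2) = 1 - thQ q := by
  have hA := h1mA hq
  have hc2 := c_sq hq
  have hth := ht_eq hq
  simp only [xi0]
  rw [sf_x2 hq ht]
  nlinarith [hA, hth]

lemma Phi_x2 (hq3 : 3 ≤ q) :
    Phi q ((1 - 2/(q:ℝ))^2) = 2 * Real.log ((q:ℝ) - 1) - 4 * (1 - 2/(q:ℝ)) := by
  have hq : 2 ≤ q := le_trans (by norm_num) hq3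
  have h0 := hQ0 hq
  have hc := c_pos hq
  have ht := (ht_pos hq3).le
  have hth : thQ q = ((q:ℝ) - 1) / (q:ℝ) := by simp only [thQ]; field_simp
  have hth2 : 1 - thQ q = 1 / (q:ℝ) := by simp only [thQ]; ring
  simp only [Phi, Lf]
  rw [xi0_x2 hq ht, sf_x2 hq ht, hth2]
  rw [show 1 - 1/(q:ℝ) = ((q:ℝ)-1)/(q:ℝ) by field_simp]
  rw [Real.log_div one_ne_zero h0.ne', Real.log_div (by have := hQm1 hq; linarith) h0.ne',
    Real.log_one]
  field_simp
  ring

lemma log_ineq (hq3 : 3 ≤ q) : 2 - 4/(q:ℝ) < Real.log ((q:ℝ) - 1) := by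
  have h3 : (3:ℝ) ≤ (q:ℝ) := by exact_mod_cast hq3
  have hlog2 : (0.6931471803 : ℝ) < Real.log 2 := Real.log_two_gt_d9
  rcases le_or_gt 9 q with h9 | h9
  · have h9' : (9:ℝ) ≤ (q:ℝ) := by exact_mod_cast h9
    have h1 : Real.log 8 ≤ Real.log ((q:ℝ) - 1) :=
      Real.log_le_log (by norm_num) (by linarith)
    have h8 : Real.log 8 = 3 * Real.log 2 := by
      rw [show (8:ℝ) = 2^3 by norm_num, Real.log_pow]
      push_cast; ring
    have hq0 : (0:ℝ) < (q:ℝ) := by linarith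
    have : 4/(q:ℝ) > 0 := by positivity
    nlinarith
  · interval_cases q
    · -- q = 3 : log 2 > 2/3
      norm_num
      nlinarith [hlog2]
    · -- q = 4 : log 3 > 1
      have : (1:ℝ) < Real.log 3 := by
        rw [Real.lt_log_iff_exp_lt (by norm_num)]
        calc Real.exp 1 < 2.7182818286 := Real.exp_one_lt_d9
        _ < 3 := by norm_num
      norm_num
      linarith
    · -- q = 5 : log 4 = 2 log 2 > 6/5
      have h4 : Real.log 4 = 2 * Real.log 2 := by
        rw [show (4:ℝ) = 2^2 by norm_num, Real.log_pow]
        push_cast; ring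
      norm_num
      nlinarith [hlog2]
    · -- q = 6 : log 5 ≥ log 4 > 4/3
      have h4 : Real.log 4 = 2 * Real.log 2 := by
        rw [show (4:ℝ) = 2^2 by norm_num, Real.log_pow]
        push_cast; ring
      have h45 : Real.log 4 ≤ Real.log 5 := Real.log_le_log (by norm_num) (by norm_num)
      norm_num
      nlinarith [hlog2]
    · -- q = 7 : log 6 = log 2 + log 3 > 10/7
      have h6 : Real.log 6 = Real.log 2 + Real.log 3 := by
        rw [show (6:ℝ) = 2*3 by norm_num, Real.log_mul (by norm_num) (by norm_num)]
      have h3' : (1:ℝ) < Real.log 3 := by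
        rw [Real.lt_log_iff_exp_lt (by norm_num)]
        calc Real.exp 1 < 2.7182818286 := Real.exp_one_lt_d9
        _ < 3 := by norm_num
      norm_num
      nlinarith [hlog2]
    · -- q = 8 : log 7 ≥ log 6 > 3/2
      have h6 : Real.log 6 = Real.log 2 + Real.log 3 := by
        rw [show (6:ℝ) = 2*3 by norm_num, Real.log_mul (by norm_num) (by norm_num)]
      have h3' : (1:ℝ) < Real.log 3 := by
        rw [Real.lt_log_iff_exp_lt (by norm_num)]
        calc Real.exp 1 < 2.7182818286 := Real.exp_one_lt_d9
        _ < 3 := by norm_num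
      have h67 : Real.log 6 ≤ Real.log 7 := Real.log_le_log (by norm_num) (by norm_num)
      norm_num
      nlinarith [hlog2]

lemma Phi_x2_pos (hq3 : 3 ≤ q) : 0 < Phi q ((1 - 2/(q:ℝ))^2) := by
  rw [Phi_x2 hq3]
  have := log_ineq hq3
  ring_nf at this ⊢
  linarith

lemma Gf_cont (hq : 2 ≤ q) : Continuous (Gf q) := by
  have h : Continuous (fun y : ℝ =>
      (y * Real.log ((q:ℝ)-1) + Real.negMulLog y + Real.negMulLog (1 - y)) / Real.log q) := by
    apply Continuous.div_const
    exact ((continuous_id.mul continuous_const).add Real.continuous_negMulLog).add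
      (Real.continuous_negMulLog.comp (continuous_const.sub continuous_id))
  have he : (Gf q) = fun y : ℝ =>
      (y * Real.log ((q:ℝ)-1) + Real.negMulLog y + Real.negMulLog (1 - y)) / Real.log q := by
    funext y
    simp only [Gf, Real.negMulLog]
    ring
  rw [he]
  exact h

lemma F0_cont (hq : 2 ≤ q) : Continuous (F0 q) := (Gf_cont hq).comp xi0_cont

lemma qEntropy_eq_Gf (hq : 2 ≤ q) (hy0 : 0 ≤ y) (hy1 : y < 1) : qEntropy q y = Gf q y := by
  have hlogq := logQ_pos hq
  rcases eq_or_lt_of_le hy0 with h0 | h0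
  · simp only [qEntropy, Gf, ← h0]
    norm_num
  · have h1 : (0:ℝ) < 1 - y := by linarith
    simp only [qEntropy, Gf, Real.logb]
    rw [Real.log_div (by have := hQm1 hq; linarith) h0.ne', one_div,  Real.log_inv]
    field_simp
    ring

lemma alpha_eq_F0 (hq : 2 ≤ q) : Set.EqOn (alphaMRRW q) (F0 q) (Set.Icc 0 (thQ q)) := by
  intro x hx
  have hx1 : x ≤ 1 := le_trans hx.2 (th_lt_one hq).le
  have hxi : xiFn q x = xi0 q x := xiFn_eq_xi0 hq hx.1 hx1
  have h0 : 0 ≤ xi0 q x := by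
    rw [← hxi]
    exact sq_nonneg _
  have h1 : xi0 q x < 1 := xi0_lt_one hq hx.1
  simp only [alphaMRRW, F0, hxi]
  exact qEntropy_eq_Gf hq h0 h1

lemma convexOn_congr {f g : ℝ → ℝ} {s : Set ℝ} (hf : ConvexOn ℝ s f) (h : Set.EqOn f g s) :
    ConvexOn ℝ s g := by
  refine ⟨hf.1, fun x hx y hy a b ha hb hab => ?_⟩
  rw [← h (hf.1 hx hy ha hb hab), ← h hx, ← h hy]
  exact hf.2 hx hy ha hb hab

lemma concaveOn_congr {f g : ℝ → ℝ} {s : Set ℝ} (hf : ConcaveOn ℝ s f) (h : Set.EqOn f g s) :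
    ConcaveOn ℝ s g := by
  refine ⟨hf.1, fun x hx y hy a b ha hb hab => ?_⟩
  rw [← h (hf.1 hx hy ha hb hab), ← h hx, ← h hy]
  exact hf.2 hx hy ha hb hab

lemma deriv_F0 (hq : 2 ≤ q) (hx : x ∈ Set.Ioo 0 (thQ q)) : deriv (F0 q) x = F1 q x :=
  (F0_hasDeriv hq hx).deriv

lemma deriv_F0_eventually (hq : 2 ≤ q) (hx : x ∈ Set.Ioo 0 (thQ q)) :
    deriv (F0 q) =ᶠ[nhds x] F1 q := by
  have hopen : Set.Ioo 0 (thQ q) ∈ nhds x := (isOpen_Ioo).mem_nhds hx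
  filter_upwards [hopen] with z hz
  exact deriv_F0 hq hz

lemma deriv2_F0 (hq : 2 ≤ q) (hx : x ∈ Set.Ioo 0 (thQ q)) :
    deriv (deriv (F0 q)) x = F2 q x := by
  rw [Filter.EventuallyEq.deriv_eq (deriv_F0_eventually hq hx)]
  exact (F1_hasDeriv hq hx).deriv

lemma convexOn_F0 (hq : 2 ≤ q) {a b : ℝ} (ha : 0 ≤ a) (hb : b ≤ thQ q)
    (hPhi : ∀ z ∈ Set.Ioo a b, 0 ≤ Phi q z) : ConvexOn ℝ (Set.Icc a b) (F0 q) := by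
  apply convexOn_of_deriv2_nonneg (convex_Icc a b) (F0_cont hq).continuousOn
  · rw [interior_Icc]
    intro z hz
    have hzm : z ∈ Set.Ioo 0 (thQ q) := ⟨lt_of_le_of_lt ha hz.1, lt_of_lt_of_le hz.2 hb⟩
    exact ((F0_hasDeriv hq hzm).differentiableAt).differentiableWithinAt
  · rw [interior_Icc]
    intro z hz
    have hzm : z ∈ Set.Ioo 0 (thQ q) := ⟨lt_of_le_of_lt ha hz.1, lt_of_lt_of_le hz.2 hb⟩
    have : DifferentiableAt ℝ (F1 q) z := (F1_hasDeriv hq hzm).differentiableAt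
    exact ((Filter.EventuallyEq.differentiableAt_iff
      (deriv_F0_eventually hq hzm)).2 this).differentiableWithinAt
  · rw [interior_Icc]
    intro z hz
    have hzm : z ∈ Set.Ioo 0 (thQ q) := ⟨lt_of_le_of_lt ha hz.1, lt_of_lt_of_le hz.2 hb⟩
    have h2 : deriv^[2] (F0 q) z = F2 q z := by
      simp only [Function.iterate_succ, Function.iterate_zero, Function.comp_apply, id_eq,
        Function.comp]
      exact deriv2_F0 hq hzm
    rw [h2, F2_eq hq hzm]
    have hsp := sf_pos hzm.1 (x_mem01 hq hzm).2
    have hc := c_pos hq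
    have hlog := logQ_pos hq
    have hphi := hPhi z hz
    positivity

lemma concaveOn_F0 (hq : 2 ≤ q) {a b : ℝ} (ha : 0 ≤ a) (hb : b ≤ thQ q)
    (hPhi : ∀ z ∈ Set.Ioo a b, Phi q z ≤ 0) : ConcaveOn ℝ (Set.Icc a b) (F0 q) := by
  apply concaveOn_of_deriv2_nonpos (convex_Icc a b) (F0_cont hq).continuousOn
  · rw [interior_Icc]
    intro z hz
    have hzm : z ∈ Set.Ioo 0 (thQ q) := ⟨lt_of_le_of_lt ha hz.1, lt_of_lt_of_le hz.2 hb⟩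
    exact ((F0_hasDeriv hq hzm).differentiableAt).differentiableWithinAt
  · rw [interior_Icc]
    intro z hz
    have hzm : z ∈ Set.Ioo 0 (thQ q) := ⟨lt_of_le_of_lt ha hz.1, lt_of_lt_of_le hz.2 hb⟩
    have : DifferentiableAt ℝ (F1 q) z := (F1_hasDeriv hq hzm).differentiableAt
    exact ((Filter.EventuallyEq.differentiableAt_iff
      (deriv_F0_eventually hq hzm)).2 this).differentiableWithinAt
  · rw [interior_Icc]
    intro z hz
    have hzm : z ∈ Set.Ioo 0 (thQ q) := ⟨lt_of_le_of_lt ha hz.1, lt_of_lt_of_le hz.2 hb⟩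
    have h2 : deriv^[2] (F0 q) z = F2 q z := by
      simp only [Function.iterate_succ, Function.iterate_zero, Function.comp_apply, id_eq,
        Function.comp]
      exact deriv2_F0 hq hzm
    rw [h2, F2_eq hq hzm]
    have hsp := sf_pos hzm.1 (x_mem01 hq hzm).2
    have hc := c_pos hq
    have hlog := logQ_pos hq
    have hphi := hPhi z hz
    have hd : 0 < 2 * sf z ^ 3 * Real.log q := by positivity
    exact div_nonpos_of_nonpos_of_nonneg (by nlinarith) hd.le

end MRRW

open MRRW

theorem stmt19 (q : ℕ) (hq : 2 ≤ q) :
    (q = 2 → ConvexOn ℝ (Set.Icc (0 : ℝ) (1 - 1 / (q : ℝ))) (alphaMRRW q)) ∧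
    (3 ≤ q → ∃ δM : ℝ,
      1 / 2 - Real.sqrt ((q : ℝ) - 1) / (q : ℝ) < δM ∧
      δM < (1 - 2 / (q : ℝ)) ^ 2 ∧
      ConcaveOn ℝ (Set.Icc (0 : ℝ) δM) (alphaMRRW q) ∧
      ConvexOn ℝ (Set.Icc δM (1 - 1 / (q : ℝ))) (alphaMRRW q)) := by
  constructor
  · intro h2
    subst h2
    have hq2 : 2 ≤ 2 := le_rfl
    have hPhi : ∀ z ∈ Set.Ioo (0:ℝ) (thQ 2), 0 ≤ Phi 2 z := by
      intro z hz
      have h := Phi_strictMonoOn hq2 (a := 0) (b := z) le_rfl (by rw [cQ_two]; norm_num)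
        hz.2 hz.1
      rw [Phi_zero hq2] at h
      exact h.le
    have hc : ConvexOn ℝ (Set.Icc (0:ℝ) (thQ 2)) (F0 2) :=
      convexOn_F0 hq2 le_rfl le_rfl hPhi
    exact convexOn_congr hc (alpha_eq_F0 hq2).symm
  · intro hq3
    have hx0pos := x0_pos hq3
    have hx0x2 := x0_lt_x2 hq3
    have hx2th := x2_lt_th hq3
    have hx0th : 1/2 - cQ q < thQ q := lt_trans hx0x2 hx2th
    have hcont : ContinuousOn (Phi q) (Set.Icc (1/2 - cQ q) ((1 - 2/(q:ℝ))^2)) := by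
      intro z hz
      exact (Phi_contAt hq (le_trans hx0pos.le hz.1)
        (lt_of_le_of_lt hz.2 hx2th)).continuousWithinAt
    have hPhix0 : Phi q (1/2 - cQ q) < 0 := by
      have h := Phi_strictAntiOn hq (a := 0) (b := 1/2 - cQ q) le_rfl le_rfl hx0th hx0pos
      rwa [Phi_zero hq] at h
    have h0mem : (0:ℝ) ∈ Set.Icc (Phi q (1/2 - cQ q)) (Phi q ((1 - 2/(q:ℝ))^2)) :=
      ⟨hPhix0.le, (Phi_x2_pos hq3).le⟩
    obtain ⟨δ, hδmem, hPhiδ⟩ := intermediate_value_Icc hx0x2.le hcont h0mem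
    have hδgt : 1/2 - cQ q < δ := by
      rcases eq_or_lt_of_le hδmem.1 with h | h
      · exfalso
        rw [h, hPhiδ] at hPhix0
        exact lt_irrefl _ hPhix0
      · exact h
    have hδlt : δ < (1 - 2/(q:ℝ))^2 := by
      rcases eq_or_lt_of_le hδmem.2 with h | h
      · exfalso
        have := Phi_x2_pos hq3
        rw [← h, hPhiδ] at this
        exact lt_irrefl _ this
      · exact h
    have hδpos : 0 < δ := lt_trans hx0pos hδgt
    have hδth : δ < thQ q := lt_trans hδlt hx2th
    refine ⟨δ, hδgt, hδlt, ?_, ?_⟩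
    · have hPhile : ∀ z ∈ Set.Ioo (0:ℝ) δ, Phi q z ≤ 0 := by
        intro z hz
        rcases le_or_gt z (1/2 - cQ q) with h | h
        · have hlt := Phi_strictAntiOn hq (a := 0) (b := z) le_rfl h
            (lt_trans hz.2 hδth) hz.1
          rw [Phi_zero hq] at hlt
          exact hlt.le
        · have hlt := Phi_strictMonoOn hq (a := z) (b := δ) hz.1.le h.le hδth hz.2
          rw [hPhiδ] at hlt
          exact hlt.le
      have hc : ConcaveOn ℝ (Set.Icc (0:ℝ) δ) (F0 q) :=
        concaveOn_F0 hq le_rfl hδth.le hPhile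
      exact concaveOn_congr hc
        (((alpha_eq_F0 hq).mono (Set.Icc_subset_Icc le_rfl hδth.le)).symm)
    · have hPhige : ∀ z ∈ Set.Ioo δ (thQ q), 0 ≤ Phi q z := by
        intro z hz
        have hlt := Phi_strictMonoOn hq (a := δ) (b := z) hδpos.le
          (le_trans hδgt.le le_rfl) hz.2 hz.1
        rw [hPhiδ] at hlt
        exact hlt.le
      have hc : ConvexOn ℝ (Set.Icc δ (thQ q)) (F0 q) :=
        convexOn_F0 hq hδpos.le le_rfl hPhige
      exact convexOn_congr hc
        (((alpha_eq_F0 hq).mono (Set.Icc_subset_Icc hδpos.le le_rfl)).symm)
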